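/- With the notation of the previous statement, the quantity (1/(5n))·ℓ_S(a^{5n} b) converges to 1/5 as n → ∞, while ℓ_S(a) = 1; hence there is no function on the space ℝ₊-weighted conjugacy classes that is simultaneously homogeneous, extends ℓ_S on conjugacy classes, and is continuous with respect to a topology in which (1/(5n))·[a^{5n}b] converges to [a]. -/

import Mathlib

open Filter Topology

namespace Stmt9

abbrev F := FreeGroup (Fin 2)

def a : F := FreeGroup.of 0
def b : F := FreeGroup.of 1

/-- The symmetric generating set S = {a, b, a⁵, a⁻¹, b⁻¹, a⁻⁵}. -/
def S : Set F := {a, b, a ^ 5, a⁻¹, b⁻¹, (a ^ 5)⁻¹}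

/-- Word length with respect to S. -/
noncomputable def ℓS (g : F) : ℕ :=
  sInf {k : ℕ | ∃ l : List F, l.length = k ∧ (∀ x ∈ l, x ∈ S) ∧ g = l.prod}

def φ : F →* Multiplicative ℤ :=
  FreeGroup.lift (fun i => Multiplicative.ofAdd (if i = 0 then 1 else 0))
def ψ : F →* Multiplicative ℤ :=
  FreeGroup.lift (fun i => Multiplicative.ofAdd (if i = 1 then 1 else 0))

lemma φ_a : (φ a).toAdd = 1 := by simp [φ, a]
lemma φ_b : (φ b).toAdd = 0 := by simp [φ, b]
lemma ψ_a : (ψ a).toAdd = 0 := by simp [ψ, a]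
lemma ψ_b : (ψ b).toAdd = 1 := by simp [ψ, b]

lemma toAdd_prod (f : F →* Multiplicative ℤ) (l : List F) :
    (f l.prod).toAdd = (l.map (fun x => (f x).toAdd)).sum := by
  induction l with
  | nil => simp
  | cons x xs ih => simp [ih]

def w (g : F) : ℤ := |(φ g).toAdd| + 5 * |(ψ g).toAdd|

lemma w_le (x : F) (hx : x ∈ S) : w x ≤ 5 := by
  simp only [S, Set.mem_insert_iff, Set.mem_singleton_iff] at hx
  rcases hx with h | h | h | h | h | h <;> subst h <;>
    simp [w, φ_a, φ_b, ψ_a, ψ_b, map_pow, map_inv, toAdd_pow, toAdd_inv]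

lemma abs_sum_le (l : List ℤ) : |l.sum| ≤ (l.map abs).sum := by
  induction l with
  | nil => simp
  | cons x xs ih =>
    simp only [List.sum_cons, List.map_cons]
    exact (abs_add_le _ _).trans (by linarith)

lemma sum_w_eq (l : List F) : (l.map w).sum =
    (l.map (fun x => |(φ x).toAdd|)).sum + 5 * (l.map (fun x => |(ψ x).toAdd|)).sum := by
  induction l with
  | nil => simp
  | cons x xs ih =>
    simp only [List.map_cons, List.sum_cons, ih, w]
    ring

lemma sum_w_le (l : List F) (hS : ∀ x ∈ l, x ∈ S) : (l.map w).sum ≤ 5 * l.length := by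
  induction l with
  | nil => simp
  | cons x xs ih =>
    simp only [List.map_cons, List.sum_cons, List.length_cons]
    have hx := w_le x (hS x (by simp))
    have h2 := ih (fun y hy => hS y (List.mem_cons_of_mem _ hy))
    push_cast at h2 ⊢
    linarith

lemma lower (n : ℕ) (l : List F) (hS : ∀ x ∈ l, x ∈ S)
    (hp : a ^ (5 * n) * b = l.prod) : n + 1 ≤ l.length := by
  have hφ : (φ l.prod).toAdd = 5 * n := by
    rw [← hp]
    simp [map_mul, map_pow, toAdd_pow, φ_a, φ_b]
  have hψ : (ψ l.prod).toAdd = 1 := by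
    rw [← hp]
    simp [map_mul, map_pow, toAdd_pow, ψ_a, ψ_b]
  have h1 : (5 * n : ℤ) ≤ (l.map (fun x => |(φ x).toAdd|)).sum := by
    have h := abs_sum_le (l.map (fun x => (φ x).toAdd))
    rw [← toAdd_prod, List.map_map] at h
    calc (5 * n : ℤ) = |(φ l.prod).toAdd| := by rw [hφ]; exact (abs_of_nonneg (by positivity)).symm
    _ ≤ _ := h
  have h2 : (1 : ℤ) ≤ (l.map (fun x => |(ψ x).toAdd|)).sum := by
    have h := abs_sum_le (l.map (fun x => (ψ x).toAdd))
    rw [← toAdd_prod, List.map_map] at h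
    calc (1 : ℤ) = |(ψ l.prod).toAdd| := by rw [hψ]; simp
    _ ≤ _ := h
  have h3 := sum_w_le l hS
  rw [sum_w_eq] at h3
  have : (n : ℤ) + 1 ≤ l.length := by linarith
  exact_mod_cast this

lemma upper (n : ℕ) : ∃ l : List F, l.length = n + 1 ∧ (∀ x ∈ l, x ∈ S) ∧
    a ^ (5 * n) * b = l.prod := by
  refine ⟨List.replicate n (a ^ 5) ++ [b], by simp, ?_, ?_⟩
  · intro x hx
    simp only [List.mem_append, List.mem_replicate, List.mem_singleton] at hx
    rcases hx with ⟨_, rfl⟩ | rfl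
    · simp [S]
    · simp [S]
  · simp [List.prod_replicate, ← pow_mul, mul_comm 5 n]

lemma ℓS_eq (n : ℕ) : ℓS (a ^ (5 * n) * b) = n + 1 := by
  apply le_antisymm
  · exact Nat.sInf_le (upper n)
  · apply le_csInf
    · exact ⟨n + 1, upper n⟩
    · rintro k ⟨l, rfl, hS, hp⟩
      exact lower n l hS hp

lemma ℓS_a : ℓS a = 1 := by
  apply le_antisymm
  · exact Nat.sInf_le ⟨[a], by simp, by simp [S], by simp⟩
  · rw [Nat.one_le_iff_ne_zero]
    intro h0
    have h : (0 : ℕ) ∈ {k : ℕ | ∃ l : List F, l.length = k ∧ (∀ x ∈ l, x ∈ S) ∧ a = l.prod} := by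
      rw [← h0]
      exact Nat.sInf_mem ⟨1, [a], by simp, by simp [S], by simp⟩
    obtain ⟨l, hl, _, hp⟩ := h
    rw [List.length_eq_zero_iff] at hl
    subst hl
    simp at hp
    exact FreeGroup.of_ne_one _ hp

/-- `ℓS(a^{5n} b)/(5n) → 1/5` while `ℓS(a) = 1`; so no homogeneous continuous extension of
`ℓS` to currents can exist. -/
theorem stmt9 :
    Tendsto (fun n : ℕ => (ℓS (a ^ (5 * n) * b) : ℝ) / (5 * n)) atTop (𝓝 (1 / 5)) ∧
    ℓS a = 1 := by
  refine ⟨?_, ℓS_a⟩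
  have h : ∀ᶠ n : ℕ in atTop, (ℓS (a ^ (5 * n) * b) : ℝ) / (5 * n)
      = 1 / 5 + 1 / (5 * n) := by
    filter_upwards [eventually_gt_atTop 0] with n hn
    rw [ℓS_eq]
    have hn' : (n : ℝ) ≠ 0 := Nat.cast_ne_zero.mpr hn.ne'
    field_simp
    norm_num
  rw [Filter.tendsto_congr' h]
  have : Tendsto (fun n : ℕ => 1 / (5 * (n : ℝ))) atTop (𝓝 0) := by
    apply Tendsto.div_atTop tendsto_const_nhds
    exact Tendsto.const_mul_atTop (by norm_num) tendsto_natCast_atTop_atTop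
  simpa using tendsto_const_nhds.add this

end Stmt9
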